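/- For every integer ℓ ≥ 2, the (ℓ−1)-fold composition κ^ℓ := κ₁ ∘ ⋯ ∘ κ₁ (with ℓ−1 factors) satisfies, as t → 0⁺, κ^ℓ(1−t) = 1 − t + (ℓ−1) · (2√2/(3π)) · t^{3/2} + o(t^{3/2}). -/

import Mathlib

open Filter Asymptotics Real Set Topology

noncomputable def kappa0 (u : ℝ) : ℝ := 1 - Real.arccos u / Real.pi

noncomputable def kappa1 (u : ℝ) : ℝ :=
  (Real.sqrt (1 - u ^ 2) + u * (Real.pi - Real.arccos u)) / Real.pi

namespace DeepRFAux

noncomputable def c : ℝ := 2 * Real.sqrt 2 / (3 * Real.pi)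

lemma tendsto_div_sin : Tendsto (fun u : ℝ => u / Real.sin u) (𝓝[>] 0) (𝓝 1) := by
  have h0 : Tendsto (slope Real.sin 0) (𝓝[≠] (0:ℝ)) (𝓝 (Real.cos 0)) :=
    hasDerivAt_iff_tendsto_slope.mp (Real.hasDerivAt_sin 0)
  have h1 : Tendsto (fun u : ℝ => Real.sin u / u) (𝓝[≠] (0:ℝ)) (𝓝 1) := by
    have : Real.cos 0 = 1 := Real.cos_zero
    rw [this] at h0
    refine h0.congr fun u => ?_
    simp [slope_def_field]
  have h2 : Tendsto (fun u : ℝ => Real.sin u / u) (𝓝[>] (0:ℝ)) (𝓝 1) :=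
    h1.mono_left (nhdsWithin_mono _ (fun x hx => ne_of_gt hx))
  have h3 := h2.inv₀ one_ne_zero
  simp only [inv_div, inv_one] at h3
  exact h3

lemma tendsto_cube :
    Tendsto (fun θ : ℝ => (Real.sin θ - θ * Real.cos θ) / θ ^ 3) (𝓝[>] 0) (𝓝 (1/3)) := by
  have key : ∀ θ : ℝ, 0 < θ → θ ≤ 1 →
      |(Real.sin θ - θ * Real.cos θ) / θ ^ 3 - 1/3| ≤ θ * (10/96) := by
    intro θ h0 h1
    have habs : |θ| ≤ 1 := by rw [abs_of_pos h0]; exact h1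
    have hs := Real.sin_bound habs
    have hc := Real.cos_bound habs
    have hθ3 : (0:ℝ) < θ ^ 3 := by positivity
    have hnum : |Real.sin θ - θ * Real.cos θ - θ ^ 3 / 3| ≤ θ ^ 4 * (10/96) := by
      have e : Real.sin θ - θ * Real.cos θ - θ ^ 3 / 3
          = (Real.sin θ - (θ - θ ^ 3 / 6)) - θ * (Real.cos θ - (1 - θ ^ 2 / 2)) := by ring
      rw [e]
      calc |(Real.sin θ - (θ - θ ^ 3 / 6)) - θ * (Real.cos θ - (1 - θ ^ 2 / 2))|
          ≤ |Real.sin θ - (θ - θ ^ 3 / 6)| + |θ * (Real.cos θ - (1 - θ ^ 2 / 2))| :=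
            abs_sub _ _
        _ ≤ |θ| ^ 4 * (5/96) + |θ| * (|θ| ^ 4 * (5/96)) := by
            rw [abs_mul]
            gcongr
            exact hs.trans (by rw [pow_succ]; nlinarith [mul_le_mul_of_nonneg_left habs (pow_nonneg (abs_nonneg θ) 4), pow_nonneg (abs_nonneg θ) 4])
        _ ≤ |θ| ^ 4 * (5/96) + 1 * (|θ| ^ 4 * (5/96)) := by
            gcongr
        _ = |θ| ^ 4 * (10/96) := by ring
        _ = θ ^ 4 * (10/96) := by rw [abs_of_pos h0]
    have e2 : (Real.sin θ - θ * Real.cos θ) / θ ^ 3 - 1/3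
        = (Real.sin θ - θ * Real.cos θ - θ ^ 3 / 3) / θ ^ 3 := by
      rw [eq_div_iff hθ3.ne', sub_mul, div_mul_cancel₀ _ hθ3.ne']
      ring
    rw [e2, abs_div, abs_of_pos hθ3, div_le_iff₀ hθ3]
    calc |Real.sin θ - θ * Real.cos θ - θ ^ 3 / 3| ≤ θ ^ 4 * (10/96) := hnum
      _ = θ * (10/96) * θ ^ 3 := by ring
  have hub : Tendsto (fun θ : ℝ => θ * (10/96)) (𝓝[>] (0:ℝ)) (𝓝 0) := by
    have h : Tendsto (fun θ : ℝ => θ * (10/96)) (𝓝 (0:ℝ)) (𝓝 ((0:ℝ) * (10/96))) :=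
      tendsto_id.mul_const _
    rw [zero_mul] at h
    exact h.mono_left nhdsWithin_le_nhds
  have hz : Tendsto (fun θ : ℝ => (Real.sin θ - θ * Real.cos θ) / θ ^ 3 - 1/3)
      (𝓝[>] (0:ℝ)) (𝓝 0) := by
    apply squeeze_zero_norm' _ hub
    filter_upwards [self_mem_nhdsWithin,
      Ioo_mem_nhdsGT_of_mem (by norm_num : (0:ℝ) ∈ Ico (0:ℝ) 1)] with θ h1 h2
    exact key θ h1 (le_of_lt h2.2)
  have := hz.add (tendsto_const_nhds (x := (1:ℝ)/3))
  simpa using this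

lemma tendsto_theta : Tendsto (fun t : ℝ => Real.arccos (1 - t)) (𝓝[>] (0:ℝ)) (𝓝[>] 0) := by
  rw [tendsto_nhdsWithin_iff]
  constructor
  · have hcont : Continuous (fun t : ℝ => Real.arccos (1 - t)) :=
      Real.continuous_arccos.comp (continuous_const.sub continuous_id)
    have h0 := hcont.tendsto 0
    simp only [sub_zero, Real.arccos_one] at h0
    exact h0.mono_left nhdsWithin_le_nhds
  · filter_upwards [self_mem_nhdsWithin] with t ht
    exact Real.arccos_pos.mpr (by linarith [mem_Ioi.mp ht])

lemma tendsto_theta_half : Tendsto (fun t : ℝ => Real.arccos (1 - t) / 2) (𝓝[>] (0:ℝ)) (𝓝[>] 0) := by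
  have hth := tendsto_theta
  rw [tendsto_nhdsWithin_iff] at hth ⊢
  obtain ⟨h1, h2⟩ := hth
  constructor
  · simpa using h1.div_const 2
  · filter_upwards [h2] with t ht; exact half_pos (mem_Ioi.mp ht)

lemma tendsto_theta_div_sqrt :
    Tendsto (fun t : ℝ => Real.arccos (1 - t) / Real.sqrt t) (𝓝[>] (0:ℝ)) (𝓝 (Real.sqrt 2)) := by
  have hcomp : Tendsto (fun t : ℝ => Real.sqrt 2 *
      ((Real.arccos (1 - t) / 2) / Real.sin (Real.arccos (1 - t) / 2)))
      (𝓝[>] (0:ℝ)) (𝓝 (Real.sqrt 2 * 1)) :=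
    tendsto_const_nhds.mul (tendsto_div_sin.comp tendsto_theta_half)
  rw [mul_one] at hcomp
  refine hcomp.congr' ?_
  filter_upwards [self_mem_nhdsWithin,
    Ioo_mem_nhdsGT_of_mem (by norm_num : (0:ℝ) ∈ Ico (0:ℝ) 1)] with t ht h01
  have ht0 : 0 < t := ht
  have ht1 : t < 1 := h01.2
  set θ := Real.arccos (1 - t) with hθdef
  have hθmem : θ ∈ Icc 0 Real.pi := ⟨Real.arccos_nonneg _, Real.arccos_le_pi _⟩
  have hcos : Real.cos θ = 1 - t := Real.cos_arccos (by linarith) (by linarith)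
  have hsin_half : Real.sin (θ / 2) = Real.sqrt ((1 - Real.cos θ) / 2) :=
    Real.sin_half_eq_sqrt hθmem.1 (by linarith [hθmem.2, Real.pi_pos])
  have hst : Real.sqrt t = Real.sqrt 2 * Real.sin (θ / 2) := by
    rw [hsin_half, hcos, ← Real.sqrt_mul (by norm_num : (0:ℝ) ≤ 2)]
    ring_nf
  have hθpos : 0 < θ := Real.arccos_pos.mpr (by linarith)
  have hsinpos : 0 < Real.sin (θ / 2) := by
    apply Real.sin_pos_of_pos_of_lt_pi (half_pos hθpos)
    linarith [hθmem.2, Real.pi_pos]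
  have h2 : (0:ℝ) < Real.sqrt 2 := Real.sqrt_pos.mpr (by norm_num)
  rw [hst]
  field_simp
  ring_nf
  rw [Real.sq_sqrt (by norm_num : (0:ℝ) ≤ 2)]

lemma rpow_eq_sqrt_cube {t : ℝ} (ht : 0 < t) : t ^ ((3:ℝ)/2) = Real.sqrt t ^ 3 := by
  rw [Real.sqrt_eq_rpow, ← Real.rpow_natCast (t ^ ((1:ℝ)/2)) 3,
    ← Real.rpow_mul ht.le]
  norm_num

lemma base : Tendsto (fun t : ℝ => (kappa1 (1 - t) - (1 - t)) / t ^ ((3:ℝ)/2))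
    (𝓝[>] (0:ℝ)) (𝓝 c) := by
  have hπ : (0:ℝ) < Real.pi := Real.pi_pos
  have hcomp : Tendsto (fun t : ℝ =>
      ((Real.sin (Real.arccos (1 - t)) - Real.arccos (1 - t) * Real.cos (Real.arccos (1 - t)))
        / Real.arccos (1 - t) ^ 3)
      * (Real.arccos (1 - t) / Real.sqrt t) ^ 3 * (1 / Real.pi))
      (𝓝[>] (0:ℝ)) (𝓝 ((1/3) * Real.sqrt 2 ^ 3 * (1 / Real.pi))) :=
    ((tendsto_cube.comp tendsto_theta).mul (tendsto_theta_div_sqrt.pow 3)).mul tendsto_const_nhds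
  have hval : (1/3 : ℝ) * Real.sqrt 2 ^ 3 * (1 / Real.pi) = c := by
    have : Real.sqrt 2 ^ 3 = 2 * Real.sqrt 2 := by
      rw [pow_succ, Real.sq_sqrt (by norm_num : (0:ℝ) ≤ 2)]
    rw [this, c]
    ring
  rw [hval] at hcomp
  refine hcomp.congr' ?_
  filter_upwards [self_mem_nhdsWithin,
    Ioo_mem_nhdsGT_of_mem (by norm_num : (0:ℝ) ∈ Ico (0:ℝ) 1)] with t ht h01
  have ht0 : 0 < t := ht
  have ht1 : t < 1 := h01.2
  set θ := Real.arccos (1 - t) with hθdef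
  have hcos : Real.cos θ = 1 - t := Real.cos_arccos (by linarith) (by linarith)
  have hθpos : 0 < θ := Real.arccos_pos.mpr (by linarith)
  have hsq : Real.sqrt t > 0 := Real.sqrt_pos.mpr ht0
  have hnum : kappa1 (1 - t) - (1 - t) = (Real.sin θ - θ * Real.cos θ) / Real.pi := by
    rw [kappa1, ← Real.sin_arccos, ← hθdef, hcos]
    field_simp
    ring
  rw [hnum, rpow_eq_sqrt_cube ht0, div_pow, div_mul_div_comm, div_mul_div_comm, div_div,
    div_eq_div_iff (by positivity) (by positivity)]
  ring

lemma iter_ratio (n : ℕ) (hn : 1 ≤ n) :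
    Tendsto (fun t : ℝ => (kappa1^[n] (1 - t) - (1 - t)) / t ^ ((3:ℝ)/2))
      (𝓝[>] (0:ℝ)) (𝓝 (n * c)) := by
  induction n, hn using Nat.le_induction with
  | base =>
    simpa using base
  | succ n hn ih =>
    set r : ℝ → ℝ := fun t => (kappa1^[n] (1 - t) - (1 - t)) / t ^ ((3:ℝ)/2) with hr
    set s : ℝ → ℝ := fun t => 1 - kappa1^[n] (1 - t) with hs
    -- basic eventual facts
    have ht32 : ∀ t : ℝ, 0 < t → (0:ℝ) < t ^ ((3:ℝ)/2) := fun t ht =>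
      Real.rpow_pos_of_pos ht _
    have hs_eq : ∀ᶠ t in 𝓝[>] (0:ℝ), s t = t - r t * t ^ ((3:ℝ)/2) := by
      filter_upwards [self_mem_nhdsWithin] with t ht
      have := (ht32 t ht).ne'
      simp only [hs, hr]
      rw [div_mul_cancel₀ _ (ht32 t ht).ne']
      ring
    -- s t / t → 1
    have hhalf : Tendsto (fun t : ℝ => t ^ ((1:ℝ)/2)) (𝓝[>] (0:ℝ)) (𝓝 0) := by
      have : Tendsto (fun t : ℝ => t ^ ((1:ℝ)/2)) (𝓝 (0:ℝ)) (𝓝 ((0:ℝ) ^ ((1:ℝ)/2))) :=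
        (Real.continuousAt_rpow_const 0 ((1:ℝ)/2) (Or.inr (by norm_num))).tendsto
      rw [Real.zero_rpow (by norm_num)] at this
      exact this.mono_left nhdsWithin_le_nhds
    have hst : Tendsto (fun t : ℝ => s t / t) (𝓝[>] (0:ℝ)) (𝓝 1) := by
      have h1 : Tendsto (fun t : ℝ => 1 - r t * t ^ ((1:ℝ)/2)) (𝓝[>] (0:ℝ))
          (𝓝 (1 - (n * c) * 0)) := tendsto_const_nhds.sub (ih.mul hhalf)
      rw [mul_zero, sub_zero] at h1
      refine h1.congr' ?_
      filter_upwards [hs_eq, self_mem_nhdsWithin] with t heq ht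
      have ht0 : 0 < t := ht
      rw [heq]
      have h32 : t ^ ((3:ℝ)/2) = t * t ^ ((1:ℝ)/2) := by
        rw [show (3:ℝ)/2 = 1 + 1/2 by norm_num, Real.rpow_add ht0, Real.rpow_one]
      rw [h32, sub_div, div_self ht0.ne', mul_div_assoc, mul_comm t, mul_div_assoc,
        div_self ht0.ne', mul_one]
    -- s tendsto 0 within Ioi
    have hs_pos : ∀ᶠ t in 𝓝[>] (0:ℝ), 0 < s t := by
      have := hst (Ioi_mem_nhds (by norm_num : (1:ℝ)/2 < 1))
      filter_upwards [this, self_mem_nhdsWithin] with t h1 h2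
      have ht0 : (0:ℝ) < t := h2
      have hq : (0:ℝ) < s t / t := lt_trans (by norm_num : (0:ℝ) < 1/2) h1
      have := mul_pos hq ht0
      rwa [div_mul_cancel₀ _ ht0.ne'] at this
    have hs_tendsto : Tendsto s (𝓝[>] (0:ℝ)) (𝓝[>] 0) := by
      rw [tendsto_nhdsWithin_iff]
      refine ⟨?_, hs_pos⟩
      have h1 : Tendsto (fun t : ℝ => (s t / t) * t) (𝓝[>] (0:ℝ)) (𝓝 (1 * 0)) := by
        refine hst.mul ?_
        exact (continuous_id.tendsto 0).mono_left nhdsWithin_le_nhds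
      rw [one_mul] at h1
      refine h1.congr' ?_
      filter_upwards [self_mem_nhdsWithin] with t ht
      exact div_mul_cancel₀ _ (ne_of_gt (show (0:ℝ) < t from ht))
    -- kappa1 ratio composed with s
    have hφ : Tendsto (fun t : ℝ => (kappa1 (1 - s t) - (1 - s t)) / (s t) ^ ((3:ℝ)/2))
        (𝓝[>] (0:ℝ)) (𝓝 c) := base.comp hs_tendsto
    -- (s/t)^{3/2} → 1
    have hpow : Tendsto (fun t : ℝ => (s t / t) ^ ((3:ℝ)/2)) (𝓝[>] (0:ℝ)) (𝓝 1) := by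
      have hcont : ContinuousAt (fun x : ℝ => x ^ ((3:ℝ)/2)) 1 :=
        Real.continuousAt_rpow_const 1 _ (Or.inl one_ne_zero)
      have := hcont.tendsto.comp hst
      rwa [Real.one_rpow] at this
    -- main computation
    have hmain : Tendsto (fun t : ℝ =>
        ((kappa1 (1 - s t) - (1 - s t)) / (s t) ^ ((3:ℝ)/2)) * (s t / t) ^ ((3:ℝ)/2) + r t)
        (𝓝[>] (0:ℝ)) (𝓝 (c * 1 + n * c)) := (hφ.mul hpow).add ih
    have hval : (c * 1 + n * c : ℝ) = (n + 1) * c := by ring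
    rw [hval] at hmain
    have : Tendsto (fun t : ℝ => (kappa1^[n+1] (1 - t) - (1 - t)) / t ^ ((3:ℝ)/2))
        (𝓝[>] (0:ℝ)) (𝓝 ((n + 1) * c)) := by
      refine hmain.congr' ?_
      filter_upwards [self_mem_nhdsWithin, hs_pos] with t ht hspos
      have ht0 : 0 < t := ht
      have hiter : kappa1^[n+1] (1 - t) = kappa1 (1 - s t) := by
        rw [Function.iterate_succ_apply']
        congr 1
        simp [hs]
      rw [hiter]
      have hdiv : (s t / t) ^ ((3:ℝ)/2) = (s t) ^ ((3:ℝ)/2) / t ^ ((3:ℝ)/2) :=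
        Real.div_rpow hspos.le ht0.le _
      rw [hdiv]
      have hs32 : (0:ℝ) < (s t) ^ ((3:ℝ)/2) := Real.rpow_pos_of_pos hspos _
      have ht32' : (0:ℝ) < t ^ ((3:ℝ)/2) := ht32 t ht0
      have hsval : kappa1^[n] (1 - t) - (1 - t) = t - s t := by simp [hs]; ring
      simp only [hr, hsval]
      field_simp
      ring
    simpa using this

end DeepRFAux

theorem deep_rf_expansion_plus_one (ℓ : ℕ) (hℓ : 2 ≤ ℓ) :
    (fun t : ℝ => kappa1^[ℓ - 1] (1 - t) -
        (1 - t + ((ℓ : ℝ) - 1) * (2 * Real.sqrt 2 / (3 * Real.pi)) * t ^ ((3 : ℝ) / 2)))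
      =o[𝓝[>] (0 : ℝ)] fun t => t ^ ((3 : ℝ) / 2) := by
  have hn : 1 ≤ ℓ - 1 := by omega
  have h := DeepRFAux.iter_ratio (ℓ - 1) hn
  have hcast : ((ℓ - 1 : ℕ) : ℝ) = (ℓ : ℝ) - 1 := by
    have : 1 ≤ ℓ := by omega
    push_cast [Nat.cast_sub this]
    ring
  rw [isLittleO_iff_tendsto']
  · have h2 : Tendsto (fun t : ℝ =>
        (kappa1^[ℓ - 1] (1 - t) - (1 - t)) / t ^ ((3:ℝ)/2) - ((ℓ:ℝ) - 1) * DeepRFAux.c)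
        (𝓝[>] (0:ℝ)) (𝓝 0) := by
      have := h.sub (tendsto_const_nhds (x := ((ℓ - 1 : ℕ) : ℝ) * DeepRFAux.c))
      rw [sub_self] at this
      rw [← hcast]
      exact this
    refine h2.congr' ?_
    filter_upwards [self_mem_nhdsWithin] with t ht
    have ht32 : (0:ℝ) < t ^ ((3:ℝ)/2) := Real.rpow_pos_of_pos ht _
    rw [DeepRFAux.c]
    field_simp
    ring
  · filter_upwards [self_mem_nhdsWithin] with t ht h0
    exact absurd h0 (Real.rpow_pos_of_pos ht _).ne'
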